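/- Let N ≥ 1 and let c₀ : ℤ^N → ℂ be any function, and set 𝒵 = {ξ ∈ ℤ^N : c₀(ξ) ∈ ℤ}. Then the following three conditions are equivalent: (i) there exist C > 0 and M ∈ ℕ such that |τ + c₀(ξ)| ≥ C(1+|ξ|)^{-M} for every τ ∈ ℤ and every ξ ∈ ℤ^N \ 𝒵; (ii) there exist C' > 0 and M' ∈ ℕ such that |1 − e^{−2πi c₀(ξ)}| ≥ C'(1+|ξ|)^{-M'} for every ξ ∈ ℤ^N \ 𝒵; (iii) there exist C'' > 0 and M'' ∈ ℕ such that |e^{2πi c₀(ξ)} − 1| ≥ C''(1+|ξ|)^{-M''} for every ξ ∈ ℤ^N \ 𝒵. -/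

import Mathlib

/-- Euclidean norm of a lattice point `ξ ∈ ℤ^N`. -/
noncomputable def znorm {N : ℕ} (ξ : Fin N → ℤ) : ℝ :=
  Real.sqrt (∑ i, ((ξ i : ℝ)) ^ 2)

open Complex Real
set_option maxHeartbeats 1000000

private lemma exp_shift (z : ℂ) (n : ℤ) :
    Complex.exp (-(2 * (Real.pi:ℂ)) * Complex.I * (z + n)) =
      Complex.exp (-(2 * (Real.pi:ℂ)) * Complex.I * z) := by
  rw [mul_add, Complex.exp_add,
    show -(2 * (Real.pi:ℂ)) * Complex.I * (n:ℂ) = ((-n : ℤ) : ℂ) * (2 * Real.pi * Complex.I) by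
      push_cast; ring,
    Complex.exp_int_mul_two_pi_mul_I, mul_one]

private lemma key_upper (z : ℂ) (τ : ℤ) (h : ‖(τ:ℂ) + z‖ ≤ 1 / (2 * Real.pi)) :
    ‖1 - Complex.exp (-(2 * (Real.pi:ℂ)) * Complex.I * z)‖ ≤
      4 * Real.pi * ‖(τ:ℂ) + z‖ := by
  have hπ := Real.pi_pos
  have h1 : Complex.exp (-(2 * (Real.pi:ℂ)) * Complex.I * z)
      = Complex.exp (-(2 * (Real.pi:ℂ)) * Complex.I * (((τ:ℂ) + z))) := by
    rw [show ((τ:ℂ) + z) = z + ((τ:ℤ):ℂ) by push_cast; ring, exp_shift]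
  set w := -(2 * (Real.pi:ℂ)) * Complex.I * ((τ:ℂ) + z) with hw
  have habsw : ‖w‖ = 2 * Real.pi * ‖(τ:ℂ) + z‖ := by
    simp [hw, norm_mul, Complex.norm_I, abs_of_pos hπ]
  have hw1 : ‖w‖ ≤ 1 := by
    rw [habsw]
    calc 2 * Real.pi * ‖(τ:ℂ) + z‖ ≤ 2 * Real.pi * (1 / (2 * Real.pi)) := by
          apply mul_le_mul_of_nonneg_left h (by positivity)
      _ = 1 := by field_simp
  rw [h1, norm_sub_rev]
  calc ‖Complex.exp w - 1‖ ≤ 2 * ‖w‖ := Complex.norm_exp_sub_one_le hw1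
    _ = 4 * Real.pi * ‖(τ:ℂ) + z‖ := by rw [habsw]; ring

private lemma key_lower (z : ℂ) (r : ℝ) (hr1 : r ≤ 1)
    (h : ∀ τ : ℤ, r ≤ ‖(τ:ℂ) + z‖) :
    r / 10 ≤ ‖1 - Complex.exp (-(2 * (Real.pi:ℂ)) * Complex.I * z)‖ := by
  have hπ := Real.pi_pos
  have hπ3 : (3:ℝ) < Real.pi := Real.pi_gt_three
  have hπ4 : Real.pi < 3.15 := Real.pi_lt_d2
  have hπ2 : Real.pi ^ 2 ≤ 10 := by nlinarith
  have hπ9 : (9:ℝ) ≤ Real.pi ^ 2 := by nlinarith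
  rcases le_or_gt r 0 with hr0 | hr0
  · calc r / 10 ≤ 0 := by linarith
      _ ≤ _ := norm_nonneg _
  set n : ℤ := round z.re with hn
  set u : ℂ := z - (n:ℂ) with hu
  have hru : r ≤ ‖u‖ := by
    have h0 := h (-n)
    rw [show (((-n : ℤ)):ℂ) + z = z - (n:ℂ) by push_cast; ring] at h0
    exact h0
  have hure : u.re = z.re - (n:ℝ) := by simp [hu]
  have hx12 : |u.re| ≤ 1/2 := by
    rw [hure, hn]
    exact abs_sub_round z.re
  have hexp : Complex.exp (-(2 * (Real.pi:ℂ)) * Complex.I * z)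
      = Complex.exp (-(2 * (Real.pi:ℂ)) * Complex.I * u) := by
    conv_lhs => rw [show z = u + ((n:ℤ):ℂ) by simp [hu]]
    rw [exp_shift]
  rw [hexp]
  set w := -(2 * (Real.pi:ℂ)) * Complex.I * u with hw
  have hwre : w.re = 2 * Real.pi * u.im := by simp [hw, Complex.mul_re, Complex.mul_im]
  have hwim : w.im = -(2 * Real.pi * u.re) := by simp [hw, Complex.mul_re, Complex.mul_im]
  have habsw : ‖w‖ = 2 * Real.pi * ‖u‖ := by
    simp [hw, norm_mul, Complex.norm_I, abs_of_pos hπ]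
  set E := Complex.exp w with hE
  have hEabs : ‖E‖ = Real.exp (2 * Real.pi * u.im) := by
    rw [hE, Complex.norm_exp, hwre]
  rcases le_or_gt (‖w‖) (1/2) with hcase | hcase
  · -- small case: Taylor bound
    have h2 : ‖E - 1 - w‖ ≤ ‖w‖ ^ 2 :=
      Complex.norm_exp_sub_one_sub_id_le (by linarith)
    have h3 : ‖w‖ ≤ ‖E - 1‖ + ‖E - 1 - w‖ := by
      calc ‖w‖ = ‖(E - 1) - (E - 1 - w)‖ := by ring_nf
        _ ≤ _ := norm_sub_le _ _
    have h4 : ‖w‖ ^ 2 ≤ (1/2) * ‖w‖ := by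
      nlinarith [norm_nonneg w]
    have h5 : ‖w‖ / 2 ≤ ‖E - 1‖ := by nlinarith
    have h6 : r ≤ ‖w‖ / 2 := by
      rw [habsw]
      nlinarith [norm_nonneg u]
    rw [norm_sub_rev]
    linarith
  · -- |w| > 1/2
    rcases le_or_gt (1/10 : ℝ) (|Real.exp (2 * Real.pi * u.im) - 1|) with hb | hb
    · -- modulus far from 1
      have habv : |‖(1:ℂ)‖ - ‖E‖| ≤ ‖1 - E‖ :=
        abs_norm_sub_norm_le 1 E
      rw [norm_one, hEabs] at habv
      rw [abs_sub_comm] at habv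
      calc r / 10 ≤ 1/10 := by linarith
        _ ≤ |Real.exp (2 * Real.pi * u.im) - 1| := hb
        _ ≤ _ := habv
    · -- modulus close to 1
      have hey : Real.exp (2 * Real.pi * u.im) ≥ 9/10 := by
        cases abs_lt.mp hb with | intro h1 h2 => linarith
      have hy : |2 * Real.pi * u.im| ≤ 1/5 := by
        by_contra hcon
        push_neg at hcon
        set s := 2 * Real.pi * u.im with hs
        rcases le_or_gt 0 s with hs0 | hs0
        · have hse : s + 1 ≤ Real.exp s := Real.add_one_le_exp s
          rw [_root_.abs_of_nonneg (by linarith : (0:ℝ) ≤ Real.exp s - 1)] at hb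
          rw [_root_.abs_of_nonneg hs0] at hcon
          linarith
        · have h15 : (1/5:ℝ) < -s := by
            rw [_root_.abs_of_neg hs0] at hcon; linarith
          have he : (6/5 : ℝ) ≤ Real.exp (1/5) := by
            have := Real.add_one_le_exp (1/5 : ℝ); linarith
          have hmon : Real.exp s ≤ Real.exp (-(1/5)) := Real.exp_le_exp.mpr (by linarith)
          have h56 : Real.exp (-(1/5)) ≤ 5/6 := by
            rw [Real.exp_neg, inv_le_comm₀ (Real.exp_pos _) (by norm_num)]
            linarith
          rw [_root_.abs_of_nonpos (by nlinarith : Real.exp s - 1 ≤ 0)] at hb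
          nlinarith
      have hy2 : u.im ^ 2 ≤ 1 / (100 * Real.pi ^ 2) := by
        have h1 : (2 * Real.pi * u.im)^2 ≤ (1/5)^2 := by
          rw [← _root_.sq_abs]
          exact pow_le_pow_left₀ (abs_nonneg _) hy 2
        rw [le_div_iff₀ (by positivity)]
        nlinarith
      have husq : ‖u‖ ^ 2 = u.re^2 + u.im^2 := by
        rw [Complex.sq_norm, Complex.normSq_apply]; ring
      have huge : 1 / (4 * Real.pi) < ‖u‖ := by
        rw [div_lt_iff₀ (by positivity)]
        rw [habsw] at hcase
        nlinarith
      have h1 : 1/(16*Real.pi^2) < u.re^2 + u.im^2 := by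
        rw [← husq]
        have h1a : (1/(4*Real.pi))^2 < ‖u‖ ^2 := by
          apply sq_lt_sq' _ huge
          have h0 := norm_nonneg u
          have h0' : (0:ℝ) < 1/(4*Real.pi) := by positivity
          linarith
        calc 1/(16*Real.pi^2) = (1/(4*Real.pi))^2 := by field_simp; ring
          _ < _ := h1a
      have hx2 : (1/16:ℝ) ≤ |u.re| := by
        by_contra hcon
        push_neg at hcon
        have h2 : u.re^2 < 1/256 := by nlinarith [_root_.sq_abs u.re, abs_nonneg u.re]
        have h3 : (1/160 : ℝ) ≤ 1/(16*Real.pi^2) :=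
          one_div_le_one_div_of_le (by positivity) (by nlinarith)
        have h4 : u.im^2 ≤ 1/900 := by
          calc u.im^2 ≤ 1/(100*Real.pi^2) := hy2
            _ ≤ 1/900 := one_div_le_one_div_of_le (by norm_num) (by nlinarith)
        linarith
      rcases le_or_gt (|u.re|) (1/4) with hx14 | hx14
      · -- use imaginary part
        have hsin : 4 * |u.re| ≤ |Real.sin (2 * Real.pi * u.re)| := by
          have h1 : |Real.sin (2 * Real.pi * u.re)| = |Real.sin (2 * Real.pi * |u.re|)| := by
            rcases abs_cases u.re with ⟨hceq, _⟩ | ⟨hceq, _⟩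
            · rw [hceq]
            · rw [hceq, show 2 * Real.pi * -u.re = -(2 * Real.pi * u.re) by ring,
                Real.sin_neg, abs_neg]
          rw [h1]
          have h2 : 2 * Real.pi * |u.re| ≤ Real.pi / 2 := by nlinarith [abs_nonneg u.re]
          have h3 : 2/Real.pi * (2 * Real.pi * |u.re|) ≤ Real.sin (2 * Real.pi * |u.re|) :=
            Real.mul_le_sin (by positivity) h2
          have h4 : 2/Real.pi * (2 * Real.pi * |u.re|) = 4 * |u.re| := by
            field_simp
            ring
          rw [h4] at h3
          exact le_trans h3 (le_abs_self _)
        have hEim : |E.im| = Real.exp (2 * Real.pi * u.im) * |Real.sin (2 * Real.pi * u.re)| := by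
          rw [hE, Complex.exp_im, hwre, hwim, Real.sin_neg]
          rw [mul_neg, abs_neg, abs_mul, _root_.abs_of_pos (Real.exp_pos _)]
        have h5 : (9/10 : ℝ) * (4 * (1/16)) ≤ |E.im| := by
          rw [hEim]
          have h5a : (4 * (1/16) : ℝ) ≤ |Real.sin (2 * Real.pi * u.re)| := by
            calc (4 * (1/16) : ℝ) ≤ 4 * |u.re| := by linarith
              _ ≤ _ := hsin
          nlinarith [abs_nonneg (Real.sin (2 * Real.pi * u.re))]
        have h6 : |E.im| ≤ ‖1 - E‖ := by
          have him : (1 - E).im = -E.im := by simp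
          calc |E.im| = |(1 - E).im| := by rw [him, abs_neg]
            _ ≤ _ := Complex.abs_im_le_norm _
        calc r/10 ≤ 9/40 := by linarith
          _ = (9/10 : ℝ) * (4 * (1/16)) := by norm_num
          _ ≤ |E.im| := h5
          _ ≤ _ := h6
      · -- use real part, cos ≤ 0
        have hcos : Real.cos (2 * Real.pi * u.re) ≤ 0 := by
          have h1c : Real.cos (2 * Real.pi * u.re) = Real.cos (2 * Real.pi * |u.re|) := by
            rcases abs_cases u.re with ⟨hceq, _⟩ | ⟨hceq, _⟩
            · rw [hceq]
            · rw [hceq, show 2 * Real.pi * -u.re = -(2 * Real.pi * u.re) by ring, Real.cos_neg]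
          rw [h1c]
          apply Real.cos_nonpos_of_pi_div_two_le_of_le
          · nlinarith
          · nlinarith
        have hEre : E.re = Real.exp (2 * Real.pi * u.im) * Real.cos (2 * Real.pi * u.re) := by
          rw [hE, Complex.exp_re, hwre, hwim, Real.cos_neg]
        have h7 : (1:ℝ) ≤ (1 - E).re := by
          have hre : (1 - E).re = 1 - E.re := by simp
          rw [hre, hEre]
          nlinarith [Real.exp_pos (2 * Real.pi * u.im)]
        calc r/10 ≤ 1 := by linarith
          _ ≤ (1 - E).re := h7
          _ ≤ _ := Complex.re_le_norm _

private lemma one_le_pow_znorm {N : ℕ} (ξ : Fin N → ℤ) (M : ℕ) : 1 ≤ (1 + znorm ξ) ^ M :=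
  one_le_pow₀ (by have h : 0 ≤ znorm ξ := Real.sqrt_nonneg _; linarith)

/-- Equivalence of the three diophantine conditions (Lemma on `c₀`). -/
theorem stmt_0 (N : ℕ) (hN : 1 ≤ N) (c0 : (Fin N → ℤ) → ℂ) :
    ((∃ C : ℝ, 0 < C ∧ ∃ M : ℕ, ∀ τ : ℤ, ∀ ξ : Fin N → ℤ, (¬ ∃ n : ℤ, c0 ξ = n) →
        C / (1 + znorm ξ) ^ M ≤ ‖(τ : ℂ) + c0 ξ‖) ↔
      (∃ C' : ℝ, 0 < C' ∧ ∃ M' : ℕ, ∀ ξ : Fin N → ℤ, (¬ ∃ n : ℤ, c0 ξ = n) →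
        C' / (1 + znorm ξ) ^ M' ≤
          ‖1 - Complex.exp (-(2 * (Real.pi : ℂ)) * Complex.I * c0 ξ)‖))
    ∧
    ((∃ C' : ℝ, 0 < C' ∧ ∃ M' : ℕ, ∀ ξ : Fin N → ℤ, (¬ ∃ n : ℤ, c0 ξ = n) →
        C' / (1 + znorm ξ) ^ M' ≤
          ‖1 - Complex.exp (-(2 * (Real.pi : ℂ)) * Complex.I * c0 ξ)‖) ↔
      (∃ C'' : ℝ, 0 < C'' ∧ ∃ M'' : ℕ, ∀ ξ : Fin N → ℤ, (¬ ∃ n : ℤ, c0 ξ = n) →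
        C'' / (1 + znorm ξ) ^ M'' ≤
          ‖Complex.exp (2 * (Real.pi : ℂ) * Complex.I * c0 ξ) - 1‖)) := by
  have hπ := Real.pi_pos
  constructor
  · constructor
    · rintro ⟨C, hC, M, hh⟩
      refine ⟨min C 1 / 10, by have := lt_min hC one_pos; linarith, M, fun ξ hξ => ?_⟩
      set P := (1 + znorm ξ) ^ M with hP
      have hP1 : 1 ≤ P := one_le_pow_znorm ξ M
      have hkey := key_lower (c0 ξ) (min C 1 / P)
        (by
          calc min C 1 / P ≤ min C 1 := div_le_self (le_min hC.le one_pos.le) hP1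
            _ ≤ 1 := min_le_right _ _)
        (fun τ => by
          calc min C 1 / P ≤ C / P :=
                div_le_div_of_nonneg_right (min_le_left _ _) (by linarith)
            _ ≤ _ := hh τ ξ hξ)
      calc min C 1 / 10 / P = min C 1 / P / 10 := by ring
        _ ≤ _ := hkey
    · rintro ⟨C', hC', M', hh⟩
      refine ⟨min (C' / (4 * Real.pi)) (1 / (2 * Real.pi)), by
        have h1 : 0 < C' / (4 * Real.pi) := by positivity
        have h2 : (0:ℝ) < 1 / (2 * Real.pi) := by positivity
        exact lt_min h1 h2, M', fun τ ξ hξ => ?_⟩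
      set P := (1 + znorm ξ) ^ M' with hP
      have hP1 : 1 ≤ P := one_le_pow_znorm ξ M'
      set a := ‖(τ : ℂ) + c0 ξ‖ with ha
      rcases le_or_gt a (1 / (2 * Real.pi)) with hcase | hcase
      · have hup := key_upper (c0 ξ) τ hcase
        have hlo := hh ξ hξ
        have h1 : C' / P ≤ 4 * Real.pi * a := le_trans hlo hup
        have h2 : C' / (4 * Real.pi) / P ≤ a := by
          rw [div_le_iff₀ (by positivity : (0:ℝ) < P)] at h1 ⊢
          calc C' / (4 * Real.pi) = C' * (1 / (4 * Real.pi)) := by ring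
            _ ≤ (4 * Real.pi * a * P) * (1 / (4 * Real.pi)) := by
                apply mul_le_mul_of_nonneg_right h1 (by positivity)
            _ = a * P := by field_simp
        calc min (C' / (4 * Real.pi)) (1 / (2 * Real.pi)) / P ≤ C' / (4 * Real.pi) / P :=
              div_le_div_of_nonneg_right (min_le_left _ _) (by linarith)
          _ ≤ a := h2
      · calc min (C' / (4 * Real.pi)) (1 / (2 * Real.pi)) / P
            ≤ min (C' / (4 * Real.pi)) (1 / (2 * Real.pi)) := by
              apply div_le_self (le_of_lt (lt_min (by positivity) (by positivity))) hP1
          _ ≤ 1 / (2 * Real.pi) := min_le_right _ _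
          _ ≤ a := hcase.le
  · constructor
    · rintro ⟨C', hC', M', hh⟩
      refine ⟨min C' 1 / 2, by have := lt_min hC' one_pos; linarith, M', fun ξ hξ => ?_⟩
      set P := (1 + znorm ξ) ^ M' with hP
      have hP1 : 1 ≤ P := one_le_pow_znorm ξ M'
      set z := c0 ξ with hz
      have hprod : Complex.exp (2 * (Real.pi:ℂ) * Complex.I * z) *
          Complex.exp (-(2 * (Real.pi:ℂ)) * Complex.I * z) = 1 := by
        rw [← Complex.exp_add, show (2 * (Real.pi:ℂ) * Complex.I * z +
          -(2 * (Real.pi:ℂ)) * Complex.I * z) = 0 by ring, Complex.exp_zero]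
      set A := ‖Complex.exp (2 * (Real.pi:ℂ) * Complex.I * z)‖ with hA
      rcases le_or_gt A (1/2) with hcase | hcase
      · have h1 : 1 - A ≤ ‖Complex.exp (2 * (Real.pi:ℂ) * Complex.I * z) - 1‖ := by
          have h2 : |A - ‖(1:ℂ)‖| ≤
              ‖Complex.exp (2 * (Real.pi:ℂ) * Complex.I * z) - 1‖ :=
            abs_norm_sub_norm_le _ 1
          rw [norm_one] at h2
          calc 1 - A ≤ |A - 1| := by rw [abs_sub_comm]; exact le_abs_self _
            _ ≤ _ := h2
        calc min C' 1 / 2 / P ≤ min C' 1 / 2 := div_le_self (by positivity) hP1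
          _ ≤ 1 / 2 := by have := min_le_right C' 1; linarith
          _ ≤ 1 - A := by linarith
          _ ≤ _ := h1
      · have hid : ‖Complex.exp (2 * (Real.pi:ℂ) * Complex.I * z) - 1‖
            = A * ‖1 - Complex.exp (-(2 * (Real.pi:ℂ)) * Complex.I * z)‖ := by
          rw [show Complex.exp (2 * (Real.pi:ℂ) * Complex.I * z) - 1
            = Complex.exp (2 * (Real.pi:ℂ) * Complex.I * z) *
              (1 - Complex.exp (-(2 * (Real.pi:ℂ)) * Complex.I * z)) by
              rw [mul_sub, mul_one, hprod], norm_mul]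
        have hlo := hh ξ hξ
        rw [hid]
        have h3 : min C' 1 / P ≤
            ‖1 - Complex.exp (-(2 * (Real.pi:ℂ)) * Complex.I * z)‖ := by
          calc min C' 1 / P ≤ C' / P :=
                div_le_div_of_nonneg_right (min_le_left _ _) (by linarith)
            _ ≤ _ := hlo
        have h4 : (0:ℝ) ≤ ‖1 - Complex.exp (-(2 * (Real.pi:ℂ)) * Complex.I * z)‖ :=
          norm_nonneg _
        calc min C' 1 / 2 / P = (1/2) * (min C' 1 / P) := by ring
          _ ≤ (1/2) * ‖1 - Complex.exp (-(2 * (Real.pi:ℂ)) * Complex.I * z)‖ := by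
              linarith
          _ ≤ A * ‖1 - Complex.exp (-(2 * (Real.pi:ℂ)) * Complex.I * z)‖ := by
              apply mul_le_mul_of_nonneg_right hcase.le h4
    · rintro ⟨C'', hC'', M'', hh⟩
      refine ⟨min C'' 1 / 2, by have := lt_min hC'' one_pos; linarith, M'', fun ξ hξ => ?_⟩
      set P := (1 + znorm ξ) ^ M'' with hP
      have hP1 : 1 ≤ P := one_le_pow_znorm ξ M''
      set z := c0 ξ with hz
      have hprod : Complex.exp (-(2 * (Real.pi:ℂ)) * Complex.I * z) *
          Complex.exp (2 * (Real.pi:ℂ) * Complex.I * z) = 1 := by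
        rw [← Complex.exp_add, show (-(2 * (Real.pi:ℂ)) * Complex.I * z +
          2 * (Real.pi:ℂ) * Complex.I * z) = 0 by ring, Complex.exp_zero]
      set B := ‖Complex.exp (-(2 * (Real.pi:ℂ)) * Complex.I * z)‖ with hB
      rcases le_or_gt B (1/2) with hcase | hcase
      · have h1 : 1 - B ≤ ‖1 - Complex.exp (-(2 * (Real.pi:ℂ)) * Complex.I * z)‖ := by
          have h2 : |‖(1:ℂ)‖ - B| ≤
              ‖1 - Complex.exp (-(2 * (Real.pi:ℂ)) * Complex.I * z)‖ :=
            abs_norm_sub_norm_le 1 _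
          rw [norm_one] at h2
          calc 1 - B ≤ |1 - B| := le_abs_self _
            _ ≤ _ := h2
        calc min C'' 1 / 2 / P ≤ min C'' 1 / 2 := div_le_self (by positivity) hP1
          _ ≤ 1 / 2 := by have := min_le_right C'' 1; linarith
          _ ≤ 1 - B := by linarith
          _ ≤ _ := h1
      · have hid : ‖1 - Complex.exp (-(2 * (Real.pi:ℂ)) * Complex.I * z)‖
            = B * ‖Complex.exp (2 * (Real.pi:ℂ) * Complex.I * z) - 1‖ := by
          rw [show (1:ℂ) - Complex.exp (-(2 * (Real.pi:ℂ)) * Complex.I * z)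
            = Complex.exp (-(2 * (Real.pi:ℂ)) * Complex.I * z) *
              (Complex.exp (2 * (Real.pi:ℂ) * Complex.I * z) - 1) by
              rw [mul_sub, mul_one, hprod], norm_mul]
        have hlo := hh ξ hξ
        rw [hid]
        have h3 : min C'' 1 / P ≤
            ‖Complex.exp (2 * (Real.pi:ℂ) * Complex.I * z) - 1‖ := by
          calc min C'' 1 / P ≤ C'' / P :=
                div_le_div_of_nonneg_right (min_le_left _ _) (by linarith)
            _ ≤ _ := hlo
        have h4 : (0:ℝ) ≤ ‖Complex.exp (2 * (Real.pi:ℂ) * Complex.I * z) - 1‖ :=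
          norm_nonneg _
        calc min C'' 1 / 2 / P = (1/2) * (min C'' 1 / P) := by ring
          _ ≤ (1/2) * ‖Complex.exp (2 * (Real.pi:ℂ) * Complex.I * z) - 1‖ := by
              linarith
          _ ≤ B * ‖Complex.exp (2 * (Real.pi:ℂ) * Complex.I * z) - 1‖ := by
              apply mul_le_mul_of_nonneg_right hcase.le h4
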